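/- Under the same setup, the reordered vector (U'₁,…,U'ₙ) = σ_{X₁,…,Xₙ}(U₁,…,Uₙ) is independent of (X₁,…,Xₙ): for every measurable M ⊆ ℝⁿ, the conditional expectation E[1_M(U'₁,…,U'ₙ) | X₁,…,Xₙ] equals the constant P((U'₁,…,U'ₙ) ∈ M) almost surely. -/

import Mathlib

open MeasureTheory ProbabilityTheory

/-- Under the same setup, the reordered vector `U' = σ_{X}(U)` is independent of `X`:
`E[1_M(U') | X] = P(U' ∈ M)` a.s. for every measurable `M`. -/
theorem stmt_2 {Ω : Type*} [MeasurableSpace Ω] (P : Measure Ω) [IsProbabilityMeasure P]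
    (n : ℕ) (η : Measure ℝ) [IsProbabilityMeasure η]
    (X U : Ω → (Fin n → ℝ)) (hX : Measurable X) (hU : Measurable U)
    (hindep : IndepFun X U P)
    (hUlaw : Measure.map U P = Measure.pi fun _ : Fin n => η)
    (σ : (Fin n → ℝ) → Equiv.Perm (Fin n))
    (hσ : ∀ π : Equiv.Perm (Fin n), MeasurableSet {x : Fin n → ℝ | σ x = π})
    (M : Set (Fin n → ℝ)) (hM : MeasurableSet M) :
    P[(fun ω => Set.indicator M (fun _ => (1 : ℝ)) (fun i => U ω (σ (X ω) i))) |
        MeasurableSpace.comap X inferInstance]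
      =ᵐ[P] fun _ => (P {ω | (fun i => U ω (σ (X ω) i)) ∈ M}).toReal := by
  classical
  set Y : Ω → (Fin n → ℝ) := fun ω i => U ω (σ (X ω) i) with hYdef
  -- measurability of Y
  have hY : Measurable Y := by
    apply measurable_pi_lambda
    intro i
    have hk : Measurable fun ω => σ (X ω) i := by
      apply measurable_to_countable'
      intro j
      have h1 : (fun ω => σ (X ω) i) ⁻¹' {j}
          = X ⁻¹' (⋃ (π : Equiv.Perm (Fin n)) (_ : π i = j), {x | σ x = π}) := by
        ext ω
        simp only [Set.mem_preimage, Set.mem_singleton_iff, Set.mem_iUnion, Set.mem_setOf_eq]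
        constructor
        · intro h; exact ⟨σ (X ω), h, rfl⟩
        · rintro ⟨π, hj, hπ⟩; rw [hπ]; exact hj
      rw [h1]
      exact hX (MeasurableSet.iUnion fun π => MeasurableSet.iUnion fun _ => hσ π)
    have h2 : (fun ω => U ω (σ (X ω) i))
        = fun ω => ∑ j : Fin n, if σ (X ω) i = j then U ω j else 0 := by
      funext ω; rw [Finset.sum_ite_eq]; simp
    rw [show (fun ω => Y ω i) = fun ω => U ω (σ (X ω) i) from rfl, h2]
    exact Finset.measurable_sum _ fun j _ =>
      Measurable.ite (hk (measurableSet_singleton j)) ((measurable_pi_apply j).comp hU)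
        measurable_const
  -- permutation invariance of the product measure
  have hpi : ∀ (π : Equiv.Perm (Fin n)) (B : Set (Fin n → ℝ)),
      (Measure.pi fun _ : Fin n => η) ((fun u : Fin n → ℝ => fun i => u (π i)) ⁻¹' B)
        = (Measure.pi fun _ : Fin n => η) B := by
    intro π B
    have hmp := MeasureTheory.measurePreserving_piCongrLeft (fun _ : Fin n => η)
      (π.symm : Fin n ≃ Fin n)
    have hcoe : ⇑(MeasurableEquiv.piCongrLeft (fun _ : Fin n => ℝ) (π.symm : Fin n ≃ Fin n))
        = fun u : Fin n → ℝ => fun i => u (π i) := by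
      funext u
      funext i
      have h := MeasurableEquiv.piCongrLeft_apply_apply (π.symm : Fin n ≃ Fin n)
        (β := fun _ : Fin n => ℝ) u (π i)
      simpa using h
    conv_lhs => rw [← hcoe]
    rw [← MeasurableEquiv.map_apply, hmp.map_eq]
  have hUB : ∀ B : Set (Fin n → ℝ), MeasurableSet B →
      P (U ⁻¹' B) = (Measure.pi fun _ : Fin n => η) B := by
    intro B hB; rw [← hUlaw, Measure.map_apply hU hB]
  have hBπ_meas : ∀ π : Equiv.Perm (Fin n),
      Measurable (fun u : Fin n → ℝ => fun i => u (π i)) :=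
    fun π => measurable_pi_lambda _ fun i => measurable_pi_apply _
  -- joint law computation
  have hjoint : ∀ A B : Set (Fin n → ℝ), MeasurableSet A → MeasurableSet B →
      P (X ⁻¹' A ∩ Y ⁻¹' B) = P (X ⁻¹' A) * (Measure.pi fun _ : Fin n => η) B := by
    intro A B hA hB
    have hdecomp : X ⁻¹' A ∩ Y ⁻¹' B
        = ⋃ π : Equiv.Perm (Fin n),
            (X ⁻¹' (A ∩ {x | σ x = π})
              ∩ U ⁻¹' ((fun u : Fin n → ℝ => fun i => u (π i)) ⁻¹' B)) := by
      ext ω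
      simp only [Set.mem_inter_iff, Set.mem_preimage, Set.mem_iUnion, Set.mem_setOf_eq]
      constructor
      · rintro ⟨hA', hB'⟩
        exact ⟨σ (X ω), ⟨hA', rfl⟩, hB'⟩
      · rintro ⟨π, ⟨hA', hπ⟩, hB'⟩
        refine ⟨hA', ?_⟩
        show (fun i => U ω (σ (X ω) i)) ∈ B
        rw [hπ]
        exact hB'
    have hdisj : Pairwise (Function.onFun Disjoint fun π : Equiv.Perm (Fin n) =>
        X ⁻¹' (A ∩ {x | σ x = π})
          ∩ U ⁻¹' ((fun u : Fin n → ℝ => fun i => u (π i)) ⁻¹' B)) := by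
      intro π π' hne
      refine Set.disjoint_left.mpr ?_
      rintro ω ⟨h1, _⟩ ⟨h2, _⟩
      exact hne (h1.2.symm.trans h2.2)
    have hmeas : ∀ π : Equiv.Perm (Fin n),
        MeasurableSet (X ⁻¹' (A ∩ {x | σ x = π})
          ∩ U ⁻¹' ((fun u : Fin n → ℝ => fun i => u (π i)) ⁻¹' B)) :=
      fun π => (hX (hA.inter (hσ π))).inter (hU ((hBπ_meas π) hB))
    rw [hdecomp, measure_iUnion hdisj hmeas]
    have hterm : ∀ π : Equiv.Perm (Fin n),
        P (X ⁻¹' (A ∩ {x | σ x = π})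
            ∩ U ⁻¹' ((fun u : Fin n → ℝ => fun i => u (π i)) ⁻¹' B))
          = P (X ⁻¹' (A ∩ {x | σ x = π})) * (Measure.pi fun _ : Fin n => η) B := by
      intro π
      rw [hindep.measure_inter_preimage_eq_mul _ _ (hA.inter (hσ π)) ((hBπ_meas π) hB),
        hUB _ ((hBπ_meas π) hB), hpi]
    calc (∑' π : Equiv.Perm (Fin n),
            P (X ⁻¹' (A ∩ {x | σ x = π})
              ∩ U ⁻¹' ((fun u : Fin n → ℝ => fun i => u (π i)) ⁻¹' B)))
        = ∑' π : Equiv.Perm (Fin n),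
            P (X ⁻¹' (A ∩ {x | σ x = π})) * (Measure.pi fun _ : Fin n => η) B := by
          exact tsum_congr hterm
      _ = (∑' π : Equiv.Perm (Fin n), P (X ⁻¹' (A ∩ {x | σ x = π})))
            * (Measure.pi fun _ : Fin n => η) B := ENNReal.tsum_mul_right
      _ = P (X ⁻¹' A) * (Measure.pi fun _ : Fin n => η) B := by
          congr 1
          have hcover : (⋃ π : Equiv.Perm (Fin n), X ⁻¹' (A ∩ {x | σ x = π})) = X ⁻¹' A := by
            ext ω
            simp only [Set.mem_iUnion, Set.mem_preimage, Set.mem_inter_iff, Set.mem_setOf_eq]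
            constructor
            · rintro ⟨π, hA', _⟩; exact hA'
            · intro hA'; exact ⟨σ (X ω), hA', rfl⟩
          have hdisj' : Pairwise (Function.onFun Disjoint fun π : Equiv.Perm (Fin n) =>
              X ⁻¹' (A ∩ {x | σ x = π})) := by
            intro π π' hne
            refine Set.disjoint_left.mpr ?_
            rintro ω ⟨_, h1⟩ ⟨_, h2⟩
            exact hne (h1.symm.trans h2)
          rw [← measure_iUnion hdisj' fun π => hX (hA.inter (hσ π)), hcover]
  -- law of Y
  have hYB : ∀ B : Set (Fin n → ℝ), MeasurableSet B →
      P (Y ⁻¹' B) = (Measure.pi fun _ : Fin n => η) B := by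
    intro B hB
    have h := hjoint Set.univ B MeasurableSet.univ hB
    simpa using h
  -- independence of X and Y
  have hindepXY : IndepFun X Y P := by
    rw [indepFun_iff_measure_inter_preimage_eq_mul]
    intro A B hA hB
    rw [hjoint A B hA hB, hYB B hB]
  -- conditional expectation
  have hg : Measurable (M.indicator (fun _ => (1 : ℝ))) := measurable_const.indicator hM
  have hYc : Measurable[MeasurableSpace.comap Y inferInstance] Y :=
    Measurable.of_comap_le le_rfl
  have hf1 : StronglyMeasurable[MeasurableSpace.comap Y inferInstance]
      (fun ω => Set.indicator M (fun _ => (1 : ℝ)) (Y ω)) :=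
    (hg.comp hYc).stronglyMeasurable
  have hindp : Indep (MeasurableSpace.comap Y inferInstance)
      (MeasurableSpace.comap X inferInstance) P := hindepXY.symm
  have hce := condExp_indep_eq (μ := P)
    (hY.comap_le) (hX.comap_le) hf1 hindp
  have hint : ∫ ω, Set.indicator M (fun _ => (1 : ℝ)) (Y ω) ∂P = (P (Y ⁻¹' M)).toReal := by
    have heq : (fun ω => Set.indicator M (fun _ => (1 : ℝ)) (Y ω))
        = (Y ⁻¹' M).indicator (fun _ => (1 : ℝ)) := by
      funext ω; by_cases h : Y ω ∈ M <;> simp [Set.indicator_apply, h]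
    rw [heq, integral_indicator_const _ (hY hM)]; simp [Measure.real]
  have hfinal : (fun _ : Ω => ∫ ω, Set.indicator M (fun _ => (1 : ℝ)) (Y ω) ∂P)
      = fun _ : Ω => (P (Y ⁻¹' M)).toReal := funext fun _ => hint
  exact hce.trans (Filter.EventuallyEq.of_eq hfinal)
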